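/- Let $\frak{a}, \frak{b} \subseteq \mathbb{C}[T_1,\ldots,T_d]$ be non-zero monomial ideals with Newton polyhedra $P_{\frak{a}}, P_{\frak{b}}$, and let $\alpha \in \mathbb{Q}_{>0}$, $\beta \in \mathbb{Q}_{\geq 0}$. Then the following are equivalent: (i) for every $\mathbf{q} \in \mathbb{R}^d_{\geq 0}$ with $\sum_i \mathbf{q}_i \mathbf{u}_i \geq 1$ for all $\mathbf{u} \in P_{\frak{a}}$, one has $\beta \cdot \inf_{\mathbf{v} \in P_{\frak{b}}} \sum_i \mathbf{q}_i \mathbf{v}_i + \sum_i \mathbf{q}_i \geq \alpha$; (ii) $\beta \cdot P_{\frak{b}} + \mathbf{e} \subseteq \alpha \cdot P_{\frak{a}}$, where $\mathbf{e} = (1,\ldots,1)$. -/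

import Mathlib

open Set Pointwise

private lemma orthant_convex (d : ℕ) : Convex ℝ {x : Fin d → ℝ | ∀ i, 0 ≤ x i} := by
  intro x hx y hy a b ha hb _ i
  simp only [Pi.add_apply, Pi.smul_apply, smul_eq_mul]
  exact add_nonneg (mul_nonneg ha (hx i)) (mul_nonneg hb (hy i))

private lemma orthant_closed (d : ℕ) : IsClosed {x : Fin d → ℝ | ∀ i, 0 ≤ x i} := by
  have : {x : Fin d → ℝ | ∀ i, 0 ≤ x i} = ⋂ i, {x : Fin d → ℝ | 0 ≤ x i} := by
    ext x; simp
  rw [this]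
  exact isClosed_iInter fun i => isClosed_le continuous_const (continuous_apply i)

private lemma hull_nonneg {d : ℕ} (M : Set (Fin d → ℕ)) :
    convexHull ℝ ((fun (u : Fin d → ℕ) (i : Fin d) => (u i : ℝ)) '' M) ⊆
      {x : Fin d → ℝ | ∀ i, 0 ≤ x i} := by
  apply convexHull_min _ (orthant_convex d)
  rintro x ⟨u, -, rfl⟩ i
  positivity

private lemma cube_mem {d : ℕ} (M : Set (Fin d → ℕ))
    (hup : ∀ u ∈ M, ∀ v : Fin d → ℕ, (∀ i, u i ≤ v i) → v ∈ M)
    (c : Fin d → ℝ) (hc0 : ∀ i, 0 ≤ c i) (hc1 : ∀ i, c i ≤ 1) :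
    ∀ w ∈ M, (fun i => (w i : ℝ) + c i) ∈
      convexHull ℝ ((fun (u : Fin d → ℕ) (i : Fin d) => (u i : ℝ)) '' M) := by
  suffices h : ∀ S : Finset (Fin d), ∀ w ∈ M,
      (fun i => (w i : ℝ) + if i ∈ S then c i else 0) ∈
        convexHull ℝ ((fun (u : Fin d → ℕ) (i : Fin d) => (u i : ℝ)) '' M) by
    intro w hw
    simpa using h Finset.univ w hw
  intro S
  induction S using Finset.induction_on with
  | empty =>
      intro w hw
      simpa using subset_convexHull ℝ _ (Set.mem_image_of_mem _ hw)
  | @insert j S' hj ih =>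
      intro w hw
      have hw' : (fun i => w i + (if i = j then 1 else 0)) ∈ M :=
        hup w hw _ (fun i => by by_cases h : i = j <;> simp [h])
      have h1 := ih w hw
      have h2 := ih _ hw'
      have hcj0 := hc0 j
      have hcj1 := hc1 j
      have hmem := (convex_convexHull ℝ _) h1 h2
        (by linarith : (0:ℝ) ≤ 1 - c j) hcj0 (by ring)
      convert hmem using 1
      funext i
      simp only [Pi.add_apply, Pi.smul_apply, smul_eq_mul]
      by_cases h : i = j
      · subst h
        simp only [Finset.mem_insert, true_or, if_pos rfl, hj, if_neg hj, if_pos rfl]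
        push_cast
        ring
      · have hne : (i = j) = False := by simp [h]
        simp only [Finset.mem_insert, h, false_or, hne, if_false]
        push_cast
        ring

private lemma hull_upward {d : ℕ} (M : Set (Fin d → ℕ))
    (hup : ∀ u ∈ M, ∀ v : Fin d → ℕ, (∀ i, u i ≤ v i) → v ∈ M)
    {x t : Fin d → ℝ}
    (hx : x ∈ convexHull ℝ ((fun (u : Fin d → ℕ) (i : Fin d) => (u i : ℝ)) '' M))
    (ht : ∀ i, 0 ≤ t i) :
    x + t ∈ convexHull ℝ ((fun (u : Fin d → ℕ) (i : Fin d) => (u i : ℝ)) '' M) := by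
  set A := (fun (u : Fin d → ℕ) (i : Fin d) => (u i : ℝ)) '' M with hA
  have key : ∀ a ∈ A, t + a ∈ convexHull ℝ A := by
    rintro _ ⟨u, hu, rfl⟩
    have hu' : (fun i => u i + ⌊t i⌋₊) ∈ M := hup u hu _ (fun i => Nat.le_add_right _ _)
    have hmem := cube_mem M hup (fun i => t i - ⌊t i⌋₊)
      (fun i => sub_nonneg.2 (Nat.floor_le (ht i)))
      (fun i => by show t i - (⌊t i⌋₊ : ℝ) ≤ 1; have := Nat.lt_floor_add_one (t i); linarith) _ hu'
    convert hmem using 1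
    funext i
    simp only [Pi.add_apply]
    push_cast
    ring
  have h1 : t + x ∈ t +ᵥ convexHull ℝ A := by
    exact Set.vadd_mem_vadd_set hx
  rw [← convexHull_vadd] at h1
  have h2 : (t +ᵥ A) ⊆ convexHull ℝ A := by
    rintro _ ⟨a, ha, rfl⟩
    exact key a ha
  have := convexHull_min h2 (convex_convexHull ℝ A) h1
  rwa [add_comm]

private lemma hull_isClosed {d : ℕ} (M : Set (Fin d → ℕ))
    (hup : ∀ u ∈ M, ∀ v : Fin d → ℕ, (∀ i, u i ≤ v i) → v ∈ M) :
    IsClosed (convexHull ℝ ((fun (u : Fin d → ℕ) (i : Fin d) => (u i : ℝ)) '' M)) := by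
  classical
  have hpwo : ∀ s : Set (Fin d → ℕ), s.IsPWO := fun s =>
    Set.isPWO_of_wellQuasiOrderedLE s
  set C : (Fin d → ℕ) → (Fin d → ℝ) := fun u i => (u i : ℝ) with hC
  set F : Set (Fin d → ℕ) := {m | m ∈ M ∧ ∀ w ∈ M, ¬ w < m} with hF
  have hFM : F ⊆ M := fun m hm => hm.1
  have hFfin : F.Finite := by
    refine IsAntichain.finite_of_partiallyWellOrderedOn (r := (· ≤ ·)) ?_ (hpwo F)
    intro a ha b hb hne hle
    exact hb.2 a ha.1 (lt_of_le_of_ne hle hne)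
  have hmin : ∀ u ∈ M, ∃ m ∈ F, m ≤ u := by
    intro u hu
    have hWF : ({w | w ∈ M ∧ w ≤ u} : Set (Fin d → ℕ)).IsWF := (hpwo _).isWF
    have hne : ({w | w ∈ M ∧ w ≤ u} : Set (Fin d → ℕ)).Nonempty := ⟨u, hu, le_refl u⟩
    refine ⟨hWF.min hne, ⟨(hWF.min_mem hne).1, fun w hw hlt => ?_⟩, (hWF.min_mem hne).2⟩
    exact hWF.not_lt_min hne ⟨hw, le_trans hlt.le (hWF.min_mem hne).2⟩ hlt
  have heq : convexHull ℝ (C '' M) =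
      {x : Fin d → ℝ | ∀ i, 0 ≤ x i} + convexHull ℝ (C '' F) := by
    apply Subset.antisymm
    · apply convexHull_min _ ((orthant_convex d).add (convex_convexHull ℝ _))
      rintro _ ⟨u, hu, rfl⟩
      obtain ⟨m, hm, hmu⟩ := hmin u hu
      have hdec : C u = (fun i => (u i : ℝ) - (m i : ℝ)) + C m := by
        funext i; simp [hC]
      rw [hdec]
      refine Set.add_mem_add (fun i => ?_) (subset_convexHull ℝ _ ⟨m, hm, rfl⟩)
      show (0:ℝ) ≤ (u i : ℝ) - (m i : ℝ)
      have := hmu i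
      have : (m i : ℝ) ≤ (u i : ℝ) := by exact_mod_cast this
      linarith
    · rintro x hx
      rw [Set.mem_add] at hx
      obtain ⟨a, ha, b, hb, rfl⟩ := hx
      have hb' : b ∈ convexHull ℝ (C '' M) :=
        convexHull_mono (Set.image_mono hFM) hb
      have := hull_upward M hup hb' ha
      rwa [add_comm]
  rw [heq]
  have hvadd : {x : Fin d → ℝ | ∀ i, 0 ≤ x i} + convexHull ℝ (C '' F) =
      {x : Fin d → ℝ | ∀ i, 0 ≤ x i} +ᵥ convexHull ℝ (C '' F) := by
    rfl
  rw [hvadd]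
  exact IsClosed.vadd_right_of_isCompact (orthant_closed d)
    ((hFfin.image C).isCompact_convexHull ℝ)

/-- The convex-duality computation in the proof of Proposition 3.9 of
Ein–Lazarsfeld–Mustaţă, *Contact loci in arc spaces*, characterizing when the pair
`(𝔸^d, α·Y - β·Z)` is log canonical for monomial subschemes `Y, Z`.  Non-zero monomial
ideals `𝔞, 𝔟` are encoded by their non-empty upward-closed exponent sets `Ma, Mb`,
with Newton polyhedra `Pa = conv(Ma)`, `Pb = conv(Mb)`.  For `α ∈ ℚ_{>0}` and
`β ∈ ℚ_{≥0}` the following are equivalent: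
(i) for every `q ∈ ℝ^d_{≥0}` with `⟨q, u⟩ ≥ 1` for all `u ∈ Pa`, one has
`β · inf_{v ∈ Pb} ⟨q, v⟩ + ∑ q_i ≥ α`;
(ii) `β · Pb + e ⊆ α · Pa`, where `e = (1,…,1)`. -/
theorem monomial_log_canonical_duality (d : ℕ) (Ma Mb : Set (Fin d → ℕ))
    (hMa : Ma.Nonempty) (hMb : Mb.Nonempty)
    (hupa : ∀ u ∈ Ma, ∀ v : Fin d → ℕ, (∀ i, u i ≤ v i) → v ∈ Ma)
    (hupb : ∀ u ∈ Mb, ∀ v : Fin d → ℕ, (∀ i, u i ≤ v i) → v ∈ Mb)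
    (Pa Pb : Set (Fin d → ℝ))
    (hPa : Pa = convexHull ℝ ((fun (u : Fin d → ℕ) (i : Fin d) => (u i : ℝ)) '' Ma))
    (hPb : Pb = convexHull ℝ ((fun (u : Fin d → ℕ) (i : Fin d) => (u i : ℝ)) '' Mb))
    (α β : ℚ) (hα : 0 < α) (hβ : 0 ≤ β) :
    (∀ q : Fin d → ℝ, (∀ i, 0 ≤ q i) → (∀ u ∈ Pa, 1 ≤ ∑ i, q i * u i) →
        (α : ℝ) ≤ (β : ℝ) * sInf {x : ℝ | ∃ v ∈ Pb, x = ∑ i, q i * v i} + ∑ i, q i)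
      ↔ ∀ v ∈ Pb, (fun i => (β : ℝ) * v i + 1) ∈ (α : ℝ) • Pa := by
  have hαR : (0:ℝ) < (α:ℝ) := by exact_mod_cast hα
  have hβR : (0:ℝ) ≤ (β:ℝ) := by exact_mod_cast hβ
  obtain ⟨a, ha⟩ := hMa
  obtain ⟨b0, hb0⟩ := hMb
  have haPa : (fun i => (a i : ℝ)) ∈ Pa := by
    rw [hPa]; exact subset_convexHull ℝ _ (Set.mem_image_of_mem _ ha)
  have hb0Pb : (fun i => (b0 i : ℝ)) ∈ Pb := by
    rw [hPb]; exact subset_convexHull ℝ _ (Set.mem_image_of_mem _ hb0)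
  have hPbnn : ∀ v ∈ Pb, ∀ i, 0 ≤ v i := by
    intro v hv i
    rw [hPb] at hv
    exact hull_nonneg Mb hv i
  constructor
  · -- (i) → (ii)
    intro h1 v hv
    by_contra hnot
    set g : Fin d → ℝ := fun i => (β:ℝ) * v i + 1 with hg
    set p : Fin d → ℝ := (α:ℝ)⁻¹ • g with hpdef
    have hp : p ∉ Pa := by
      intro hmem
      exact hnot ((Set.mem_smul_set_iff_inv_smul_mem₀ (ne_of_gt hαR) _ _).2 hmem)
    have hclosed : IsClosed Pa := by rw [hPa]; exact hull_isClosed Ma hupa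
    have hconv : Convex ℝ Pa := by rw [hPa]; exact convex_convexHull ℝ _
    obtain ⟨f, c, hfp, hfPa⟩ := geometric_hahn_banach_point_closed hconv hclosed hp
    set q' : Fin d → ℝ := fun i => f (Pi.single i 1) with hq'
    have hf : ∀ x : Fin d → ℝ, f x = ∑ i, x i * q' i := by
      intro x
      have hx : x = ∑ i, x i • (Pi.single i (1:ℝ) : Fin d → ℝ) := by
        conv_lhs => rw [← Finset.univ_sum_single x]
        refine Finset.sum_congr rfl fun i _ => ?_
        funext j
        by_cases h : j = i <;> simp [Pi.single_apply, h]
      calc f x = f (∑ i, x i • (Pi.single i (1:ℝ) : Fin d → ℝ)) := by rw [← hx]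
        _ = ∑ i, x i * q' i := by
            rw [map_sum]
            exact Finset.sum_congr rfl fun i _ => by rw [map_smul, smul_eq_mul]
    have hq'nn : ∀ i, 0 ≤ q' i := by
      intro i
      by_contra hneg
      push_neg at hneg
      set fA := f (fun j => (a j : ℝ)) with hfA
      have hcfA : c < fA := hfPa _ haPa
      set t : ℝ := (fA - c + 1) / (-q' i) with htdef
      have htpos : 0 ≤ t := div_nonneg (by linarith) (by linarith)
      have hmem : ((fun j => (a j : ℝ)) + t • (Pi.single i (1:ℝ) : Fin d → ℝ)) ∈ Pa := by
        rw [hPa]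
        refine hull_upward Ma hupa (hPa ▸ haPa) fun j => ?_
        by_cases h : j = i <;> simp [Pi.single_apply, h, htpos]
      have hgt := hfPa _ hmem
      rw [map_add, map_smul, smul_eq_mul] at hgt
      have hmul : t * (-q' i) = fA - c + 1 :=
        div_mul_cancel₀ _ (by linarith : -q' i ≠ 0)
      have h3 : -(t * q' i) = fA - c + 1 := by rw [← hmul]; ring
      have : f (Pi.single i 1) = q' i := rfl
      rw [this] at hgt
      linarith
    have hpnn : ∀ i, 0 ≤ p i := by
      intro i
      have hvi := hPbnn v hv i
      have : p i = (α:ℝ)⁻¹ * ((β:ℝ) * v i + 1) := rfl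
      rw [this]
      have : 0 ≤ (β:ℝ) * v i + 1 := by positivity
      positivity
    have hfpnn : 0 ≤ f p := by
      rw [hf]
      exact Finset.sum_nonneg fun i _ => mul_nonneg (hpnn i) (hq'nn i)
    have hc : 0 < c := lt_of_le_of_lt hfpnn hfp
    set q : Fin d → ℝ := fun i => q' i / c with hqdef
    have hqnn : ∀ i, 0 ≤ q i := fun i => div_nonneg (hq'nn i) hc.le
    have hq1 : ∀ u ∈ Pa, 1 ≤ ∑ i, q i * u i := by
      intro u hu
      have h2 : ∑ i, q i * u i = f u / c := by
        rw [hf u, Finset.sum_div]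
        exact Finset.sum_congr rfl fun i _ => by
          show q' i / c * u i = u i * q' i / c
          ring
      rw [h2, le_div_iff₀ hc, one_mul]
      exact (hfPa u hu).le
    have hmain := h1 q hqnn hq1
    set S : Set ℝ := {x | ∃ v' ∈ Pb, x = ∑ i, q i * v' i} with hS
    have hSlb : ∀ x ∈ S, (0:ℝ) ≤ x := by
      rintro x ⟨w, hw, rfl⟩
      exact Finset.sum_nonneg fun i _ => mul_nonneg (hqnn i) (hPbnn w hw i)
    have hinf : sInf S ≤ ∑ i, q i * v i := csInf_le ⟨0, hSlb⟩ ⟨v, hv, rfl⟩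
    have hmul2 : (β:ℝ) * sInf S ≤ (β:ℝ) * ∑ i, q i * v i :=
      mul_le_mul_of_nonneg_left hinf hβR
    have hfin : (β:ℝ) * (∑ i, q i * v i) + ∑ i, q i = (α:ℝ) * (f p / c) := by
      rw [hf p, Finset.mul_sum, Finset.sum_div, Finset.mul_sum, ← Finset.sum_add_distrib]
      refine Finset.sum_congr rfl fun i _ => ?_
      have hpi : p i = (α:ℝ)⁻¹ * ((β:ℝ) * v i + 1) := rfl
      have hqi : q i = q' i / c := rfl
      rw [hpi, hqi]
      field_simp
    have hdiv : f p / c < 1 := (div_lt_one hc).2 hfp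
    nlinarith [hmain, hmul2, hfin, hdiv]
  · -- (ii) → (i)
    intro h2 q hq hq1
    have key : ∀ w ∈ Pb, (α:ℝ) ≤ (β:ℝ) * (∑ i, q i * w i) + ∑ i, q i := by
      intro w hw
      obtain ⟨y, hy, hyw⟩ := h2 w hw
      have hsum : ∑ i, q i * ((β:ℝ) * w i + 1) = (α:ℝ) * ∑ i, q i * y i := by
        rw [Finset.mul_sum]
        refine Finset.sum_congr rfl fun i _ => ?_
        have hcoord := congrFun hyw i
        simp only [Pi.smul_apply, smul_eq_mul] at hcoord
        rw [← hcoord]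
        ring
      have h1y := hq1 y hy
      have hstep : (α:ℝ) * 1 ≤ (α:ℝ) * ∑ i, q i * y i :=
        mul_le_mul_of_nonneg_left h1y hαR.le
      calc (α:ℝ) = (α:ℝ) * 1 := by ring
        _ ≤ (α:ℝ) * ∑ i, q i * y i := hstep
        _ = ∑ i, q i * ((β:ℝ) * w i + 1) := hsum.symm
        _ = (β:ℝ) * (∑ i, q i * w i) + ∑ i, q i := by
            rw [Finset.mul_sum, ← Finset.sum_add_distrib]
            exact Finset.sum_congr rfl fun i _ => by ring
    set S : Set ℝ := {x | ∃ v ∈ Pb, x = ∑ i, q i * v i} with hS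
    have hSne : S.Nonempty := ⟨_, _, hb0Pb, rfl⟩
    rcases eq_or_lt_of_le hβR with hb | hb
    · have hkey := key _ hb0Pb
      rw [← hb] at hkey ⊢
      rw [zero_mul, zero_add] at hkey ⊢
      exact hkey
    · have hlb : ∀ x ∈ S, ((α:ℝ) - ∑ i, q i) / (β:ℝ) ≤ x := by
        rintro x ⟨w, hw, rfl⟩
        rw [div_le_iff₀ hb]
        have := key w hw
        nlinarith
      have hle : ((α:ℝ) - ∑ i, q i) / (β:ℝ) ≤ sInf S := le_csInf hSne hlb
      rw [div_le_iff₀ hb] at hle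
      nlinarith
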